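/- Under the two-group heteroscedastic mixture model, the function t ↦ α(t) is nondecreasing: if 0 < t_1 < t_2 < 1 and P(T_1 < t_1) > 0, then α(t_1) ≤ α(t_2). -/

import Mathlib

open MeasureTheory ProbabilityTheory Set Filter

noncomputable section

/-- Density of the `N(0, s²)` distribution, i.e. the null density `f_{0,s}(x) = φ(x/s)/s`. -/
def gaussDens (s x : ℝ) : ℝ :=
  (s * Real.sqrt (2 * Real.pi))⁻¹ * Real.exp (-(x / s) ^ 2 / 2)

/-- The alternative density `f_{1,s}(x) = ∫ φ((x−u)/s)/s dg_μ(u)`. -/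
def altDens (gmu : Measure ℝ) (s x : ℝ) : ℝ :=
  ∫ u, gaussDens s (x - u) ∂gmu

/-- The mixture density `f_s(x) = (1−π) f_{0,s}(x) + π f_{1,s}(x)`. -/
def mixDens (p : ℝ) (gmu : Measure ℝ) (s x : ℝ) : ℝ :=
  (1 - p) * gaussDens s x + p * altDens gmu s x

/-- The oracle statistic `T(x, σ) = (1−π) f_{0,σ}(x) / f_σ(x) = P(θ = 0 | x, σ)`. -/
def Tstat (p : ℝ) (gmu : Measure ℝ) (s x : ℝ) : ℝ :=
  (1 - p) * gaussDens s x / mixDens p gmu s x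

/-- Marginal false discovery rate `mFDR(δ) = E[Σᵢ (1−θᵢ)δᵢ] / E[Σᵢ δᵢ]`. -/
def mFDR {Ω : Type} [MeasurableSpace Ω] (P : Measure Ω) {m : ℕ}
    (θ δ : Fin m → Ω → ℕ) : ℝ :=
  (∫ ω, ∑ i, (1 - (θ i ω : ℝ)) * (δ i ω : ℝ) ∂P) / ∫ ω, ∑ i, ((δ i ω : ℝ)) ∂P

/-- Expected number of true positives `ETP(δ) = E[Σᵢ θᵢδᵢ]`. -/
def ETP {Ω : Type} [MeasurableSpace Ω] (P : Measure Ω) {m : ℕ}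
    (θ δ : Fin m → Ω → ℕ) : ℝ :=
  ∫ ω, ∑ i, (θ i ω : ℝ) * (δ i ω : ℝ) ∂P

end


section Auxiliary
open MeasureTheory Set

lemma measurable_gaussDens : Measurable (fun q : ℝ × ℝ => gaussDens q.1 q.2) := by
  unfold gaussDens
  fun_prop

lemma measurable_altDens (gmu : Measure ℝ) [SFinite gmu] :
    Measurable (fun q : ℝ × ℝ => altDens gmu q.1 q.2) := by
  have h : StronglyMeasurable (fun q : (ℝ × ℝ) × ℝ => gaussDens q.1.1 (q.1.2 - q.2)) := by
    apply Measurable.stronglyMeasurable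
    exact measurable_gaussDens.comp ((measurable_fst.comp measurable_fst).prodMk
      ((measurable_snd.comp measurable_fst).sub measurable_snd))
  exact (h.integral_prod_right').measurable

lemma measurable_Tstat (p : ℝ) (gmu : Measure ℝ) [SFinite gmu] :
    Measurable (fun q : ℝ × ℝ => Tstat p gmu q.1 q.2) := by
  unfold Tstat mixDens
  exact (measurable_const.mul measurable_gaussDens).div
    ((measurable_const.mul measurable_gaussDens).add
      (measurable_const.mul (measurable_altDens gmu)))

lemma div_mem_Icc_aux {a b : ℝ} (ha : 0 ≤ a) (hb : 0 ≤ b) : a / (a + b) ∈ Icc (0:ℝ) 1 := by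
  rcases eq_or_lt_of_le (by linarith : (0:ℝ) ≤ a + b) with h0 | h0
  · have ha0 : a = 0 := by linarith
    simp [ha0]
  · exact ⟨div_nonneg ha h0.le, (div_le_one h0).mpr (by linarith)⟩

lemma div_mem_Icc {a b : ℝ} (h : (0 ≤ a ∧ 0 ≤ b) ∨ (a ≤ 0 ∧ b ≤ 0)) :
    a / (a + b) ∈ Icc (0:ℝ) 1 := by
  rcases h with ⟨ha, hb⟩ | ⟨ha, hb⟩
  · exact div_mem_Icc_aux ha hb
  · have : a / (a + b) = (-a) / ((-a) + (-b)) := by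
      rw [← neg_add, neg_div_neg_eq]
    rw [this]
    exact div_mem_Icc_aux (by linarith) (by linarith)

lemma gaussDens_nonneg {s : ℝ} (hs : 0 ≤ s) (x : ℝ) : 0 ≤ gaussDens s x := by
  unfold gaussDens
  positivity

lemma gaussDens_nonpos {s : ℝ} (hs : s ≤ 0) (x : ℝ) : gaussDens s x ≤ 0 := by
  unfold gaussDens
  apply mul_nonpos_of_nonpos_of_nonneg
  · exact inv_nonpos.mpr (mul_nonpos_of_nonpos_of_nonneg hs (Real.sqrt_nonneg _))
  · exact (Real.exp_pos _).le

lemma Tstat_mem_Icc {p : ℝ} (hp0 : 0 < p) (hp1 : p < 1) (gmu : Measure ℝ) (s x : ℝ) :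
    Tstat p gmu s x ∈ Icc (0:ℝ) 1 := by
  unfold Tstat mixDens
  rcases le_or_gt s 0 with hs | hs
  · refine div_mem_Icc (Or.inr ⟨?_, ?_⟩)
    · exact mul_nonpos_of_nonneg_of_nonpos (by linarith) (gaussDens_nonpos hs x)
    · exact mul_nonpos_of_nonneg_of_nonpos hp0.le
        (integral_nonpos fun u => gaussDens_nonpos hs _)
  · refine div_mem_Icc (Or.inl ⟨?_, ?_⟩)
    · exact mul_nonneg (by linarith) (gaussDens_nonneg hs.le x)
    · exact mul_nonneg hp0.le (integral_nonneg fun u => gaussDens_nonneg hs.le _)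

lemma key_div {A₁ A₂ N₁ N₂ t : ℝ} (h1 : 0 < N₁) (h2 : 0 < N₂) (hmono : N₁ ≤ N₂)
    (h4 : A₁ ≤ t * N₁) (h5 : A₁ + t * N₂ ≤ A₂ + t * N₁) : A₁ / N₁ ≤ A₂ / N₂ := by
  rw [div_le_div_iff₀ h1 h2]
  have h5' : A₁ + t * N₂ - t * N₁ ≤ A₂ := by linarith
  nlinarith [mul_nonneg (sub_nonneg.2 hmono) (sub_nonneg.2 h4),
    mul_nonneg (sub_nonneg.2 h5) h1.le]

end Auxiliary

/-- the mFDR `α(t)` of the oracle threshold rule `(1{Tᵢ < t})ᵢ` is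
nondecreasing in the threshold `t`. -/
theorem statement3
    {Ω : Type} [MeasurableSpace Ω] (P : Measure Ω) [IsProbabilityMeasure P]
    (m : ℕ) (p : ℝ) (hp : p ∈ Ioo (0 : ℝ) 1)
    (gsig gmu : Measure ℝ) [IsProbabilityMeasure gsig] [IsProbabilityMeasure gmu]
    (hgsig : gsig (Iic 0) = 0)
    (θ : Fin m → Ω → ℕ) (sig X : Fin m → Ω → ℝ)
    (hθmeas : ∀ i, Measurable (θ i)) (hsigmeas : ∀ i, Measurable (sig i))
    (hXmeas : ∀ i, Measurable (X i))
    (hθval : ∀ i ω, θ i ω ≤ 1)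
    (hindep : iIndepFun
      (fun i ω => (θ i ω, sig i ω, X i ω)) P)
    (hlaw0 : ∀ i, ∀ B A : Set ℝ, MeasurableSet B → MeasurableSet A →
      (P {ω | θ i ω = 0 ∧ sig i ω ∈ B ∧ X i ω ∈ A}).toReal
        = (1 - p) * ∫ s in B, (∫ x in A, gaussDens s x) ∂gsig)
    (hlaw1 : ∀ i, ∀ B A : Set ℝ, MeasurableSet B → MeasurableSet A →
      (P {ω | θ i ω = 1 ∧ sig i ω ∈ B ∧ X i ω ∈ A}).toReal
        = p * ∫ s in B, (∫ x in A, altDens gmu s x) ∂gsig)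
    (hm : 0 < m)
    (alphaFun : ℝ → ℝ)
    (halphaFun : ∀ t : ℝ, alphaFun t =
      (∫ ω, ∑ i, Tstat p gmu (sig i ω) (X i ω) *
          (if Tstat p gmu (sig i ω) (X i ω) < t then (1 : ℝ) else 0) ∂P) /
        (∫ ω, ∑ i, (if Tstat p gmu (sig i ω) (X i ω) < t then (1 : ℝ) else 0) ∂P))
    (t₁ t₂ : ℝ) (ht₁ : 0 < t₁) (ht₁₂ : t₁ < t₂) (ht₂ : t₂ < 1)
    (hpos : 0 < P {ω | Tstat p gmu (sig ⟨0, hm⟩ ω) (X ⟨0, hm⟩ ω) < t₁}) :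
    alphaFun t₁ ≤ alphaFun t₂ := by
    classical
  obtain ⟨hp0, hp1⟩ := hp
  set T : Fin m → Ω → ℝ := fun i ω => Tstat p gmu (sig i ω) (X i ω) with hT_def
  set c : ℝ → Fin m → Ω → ℝ := fun t i ω => if T i ω < t then 1 else 0 with hc_def
  have hTmeas : ∀ i, Measurable (T i) := fun i =>
    (measurable_Tstat p gmu).comp ((hsigmeas i).prodMk (hXmeas i))
  have hT01 : ∀ i ω, T i ω ∈ Icc (0:ℝ) 1 := fun i ω => Tstat_mem_Icc hp0 hp1 gmu _ _
  have hcmeas : ∀ t i, Measurable (c t i) := fun t i =>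
    Measurable.ite (measurableSet_lt (hTmeas i) measurable_const)
      measurable_const measurable_const
  have hc01 : ∀ t i ω, c t i ω ∈ Icc (0:ℝ) 1 := by
    intro t i ω
    simp only [hc_def]
    split_ifs <;> norm_num
  have hcint : ∀ t i, Integrable (c t i) P := fun t i =>
    (integrable_const (1:ℝ)).mono' (hcmeas t i).aestronglyMeasurable
      (Filter.Eventually.of_forall fun ω => by
        rw [Real.norm_eq_abs, abs_le]
        exact ⟨by linarith [(hc01 t i ω).1], (hc01 t i ω).2⟩)
  have hTcint : ∀ t i, Integrable (fun ω => T i ω * c t i ω) P := fun t i =>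
    (integrable_const (1:ℝ)).mono' ((hTmeas i).mul (hcmeas t i)).aestronglyMeasurable
      (Filter.Eventually.of_forall fun ω => by
        rw [Real.norm_eq_abs, abs_mul]
        have h1 : |T i ω| ≤ 1 := abs_le.mpr ⟨by linarith [(hT01 i ω).1], (hT01 i ω).2⟩
        have h2 : |c t i ω| ≤ 1 := abs_le.mpr ⟨by linarith [(hc01 t i ω).1], (hc01 t i ω).2⟩
        calc |T i ω| * |c t i ω| ≤ 1 * 1 :=
              mul_le_mul h1 h2 (abs_nonneg _) zero_le_one
          _ = 1 := one_mul 1)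
  have hint_c : ∀ t, Integrable (fun ω => ∑ i, c t i ω) P := fun t =>
    integrable_finset_sum _ fun i _ => hcint t i
  have hint_Tc : ∀ t, Integrable (fun ω => ∑ i, T i ω * c t i ω) P := fun t =>
    integrable_finset_sum _ fun i _ => hTcint t i
  have halpha' : ∀ t, alphaFun t =
      (∫ ω, ∑ i, T i ω * c t i ω ∂P) / (∫ ω, ∑ i, c t i ω ∂P) := fun t => halphaFun t
  -- monotonicity of the denominator
  have hNmono : (∫ ω, ∑ i, c t₁ i ω ∂P) ≤ ∫ ω, ∑ i, c t₂ i ω ∂P := by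
    apply integral_mono (hint_c t₁) (hint_c t₂)
    intro ω
    apply Finset.sum_le_sum
    intro i _
    simp only [hc_def]
    split_ifs with h1 h2 <;> try norm_num
    linarith
  -- positivity of the denominator at t₁
  have hsmeas : MeasurableSet {ω | T ⟨0, hm⟩ ω < t₁} :=
    measurableSet_lt (hTmeas _) measurable_const
  have hind : (fun ω => c t₁ ⟨0, hm⟩ ω)
      = Set.indicator {ω | T ⟨0, hm⟩ ω < t₁} (fun _ => (1:ℝ)) := by
    funext ω
    simp [hc_def, Set.indicator_apply, Set.mem_setOf_eq]
  have hPT : (∫ ω, c t₁ ⟨0, hm⟩ ω ∂P) = (P {ω | T ⟨0, hm⟩ ω < t₁}).toReal := by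
    rw [hind, integral_indicator_const (1:ℝ) hsmeas, smul_eq_mul, mul_one]
    rfl
  have hposT : 0 < P {ω | T ⟨0, hm⟩ ω < t₁} := hpos
  have hN1pos : 0 < ∫ ω, ∑ i, c t₁ i ω ∂P := by
    have h1 : 0 < (P {ω | T ⟨0, hm⟩ ω < t₁}).toReal :=
      ENNReal.toReal_pos hposT.ne' (measure_ne_top P _)
    calc (0:ℝ) < ∫ ω, c t₁ ⟨0, hm⟩ ω ∂P := by rw [hPT]; exact h1
      _ ≤ ∫ ω, ∑ i, c t₁ i ω ∂P := by
          apply integral_mono (hcint t₁ _) (hint_c t₁)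
          intro ω
          exact Finset.single_le_sum (fun i _ => (hc01 t₁ i ω).1) (Finset.mem_univ _)
  have hN2pos : 0 < ∫ ω, ∑ i, c t₂ i ω ∂P := lt_of_lt_of_le hN1pos hNmono
  -- A₁ ≤ t₁ N₁
  have hA1le : (∫ ω, ∑ i, T i ω * c t₁ i ω ∂P) ≤ t₁ * ∫ ω, ∑ i, c t₁ i ω ∂P := by
    rw [← integral_const_mul]
    apply integral_mono (hint_Tc t₁) ((hint_c t₁).const_mul t₁)
    intro ω
    dsimp only
    rw [Finset.mul_sum]
    apply Finset.sum_le_sum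
    intro i _
    simp only [hc_def]
    split_ifs with h
    · simpa using h.le
    · simp
  -- A₂ + t₁ N₁ ≥ A₁ + t₁ N₂
  have hkey : (∫ ω, ∑ i, T i ω * c t₁ i ω ∂P) + t₁ * (∫ ω, ∑ i, c t₂ i ω ∂P)
      ≤ (∫ ω, ∑ i, T i ω * c t₂ i ω ∂P) + t₁ * (∫ ω, ∑ i, c t₁ i ω ∂P) := by
    have hL : Integrable (fun ω => (∑ i, T i ω * c t₁ i ω) + t₁ * (∑ i, c t₂ i ω)) P :=
      (hint_Tc t₁).add ((hint_c t₂).const_mul t₁)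
    have hR : Integrable (fun ω => (∑ i, T i ω * c t₂ i ω) + t₁ * (∑ i, c t₁ i ω)) P :=
      (hint_Tc t₂).add ((hint_c t₁).const_mul t₁)
    have heqL : ∫ ω, ((∑ i, T i ω * c t₁ i ω) + t₁ * (∑ i, c t₂ i ω)) ∂P
        = (∫ ω, ∑ i, T i ω * c t₁ i ω ∂P) + t₁ * (∫ ω, ∑ i, c t₂ i ω ∂P) := by
      rw [integral_add (hint_Tc t₁) ((hint_c t₂).const_mul t₁), integral_const_mul]
    have heqR : ∫ ω, ((∑ i, T i ω * c t₂ i ω) + t₁ * (∑ i, c t₁ i ω)) ∂P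
        = (∫ ω, ∑ i, T i ω * c t₂ i ω ∂P) + t₁ * (∫ ω, ∑ i, c t₁ i ω ∂P) := by
      rw [integral_add (hint_Tc t₂) ((hint_c t₁).const_mul t₁), integral_const_mul]
    rw [← heqL, ← heqR]
    apply integral_mono hL hR
    intro ω
    dsimp only
    rw [Finset.mul_sum, Finset.mul_sum, ← Finset.sum_add_distrib, ← Finset.sum_add_distrib]
    apply Finset.sum_le_sum
    intro i _
    simp only [hc_def]
    have hTnn := (hT01 i ω).1
    split_ifs with h1 h2 <;> (try push_neg at *) <;> simp <;> linarith
  rw [halpha' t₁, halpha' t₂]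
  exact key_div hN1pos hN2pos hNmono hA1le hkey
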